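/- Let ψ : ℝ^d → ℝ be differentiable with L-Lipschitz gradient, let x ∈ ℝ^d, let d ∈ ℝ^d be an approximate gradient satisfying ‖d − ∇ψ(x)‖² ≤ ε̂ for some ε̂ ≥ 0, let a > 0, and set x' := x − (1/a) d. Then ψ(x') ≤ ψ(x) − (1/(2a)) ‖∇ψ(x)‖² − (1/(2a))(1 − L/a) ‖d‖² + ε̂/(2a). In particular, if a ≥ 2L, then ψ(x') ≤ ψ(x) − (1/(2a)) ‖∇ψ(x)‖² − (1/(4a)) ‖d‖² + ε̂/(2a). -/

import Mathlib

open InnerProductSpace intervalIntegral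

local notation "⟪" x ", " y "⟫" => @inner ℝ _ _ x y

/-- Sharp descent lemma: for `ψ` with `L`-Lipschitz gradient,
`ψ y ≤ ψ x + ⟪∇ψ x, y - x⟫ + L/2 ‖y - x‖²`. -/
lemma descent_lemma {n : ℕ} (ψ : EuclideanSpace ℝ (Fin n) → ℝ) (hdiff : Differentiable ℝ ψ)
    (L : ℝ) (hLip : ∀ u v, ‖gradient ψ u - gradient ψ v‖ ≤ L * ‖u - v‖)
    (x y : EuclideanSpace ℝ (Fin n)) :
    ψ y ≤ ψ x + ⟪gradient ψ x, y - x⟫ + L / 2 * ‖y - x‖ ^ 2 := by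
  set v := y - x with hv
  -- gradient is continuous (Lipschitz with constant |L|)
  have hgradLip : LipschitzWith (Real.toNNReal L) (gradient ψ) := by
    apply LipschitzWith.of_dist_le_mul
    intro u w
    rw [dist_eq_norm, dist_eq_norm]
    calc ‖gradient ψ u - gradient ψ w‖ ≤ L * ‖u - w‖ := hLip u w
      _ ≤ (Real.toNNReal L : ℝ) * ‖u - w‖ := by
          gcongr
          exact Real.le_coe_toNNReal L
  have hgradCont : Continuous (gradient ψ) := hgradLip.continuous
  -- derivative of the restriction along the segment
  have hline : ∀ t : ℝ, HasDerivAt (fun s : ℝ => x + s • v) v t := by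
    intro t
    simpa using ((hasDerivAt_id t).smul_const v).const_add x
  have hderiv : ∀ t : ℝ, HasDerivAt (fun s : ℝ => ψ (x + s • v))
      ⟪gradient ψ (x + t • v), v⟫ t := by
    intro t
    have h1 : HasFDerivAt ψ (toDual ℝ _ (gradient ψ (x + t • v))) (x + t • v) :=
      (hdiff (x + t • v)).hasGradientAt.hasFDerivAt
    have := h1.comp_hasDerivAt t (hline t)
    exact this
  have hcont : Continuous fun t : ℝ => ⟪gradient ψ (x + t • v), v⟫ := by
    apply Continuous.inner
    · exact hgradCont.comp (by continuity)
    · exact continuous_const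
  have key : ψ y - ψ x = ∫ t in (0:ℝ)..1, ⟪gradient ψ (x + t • v), v⟫ := by
    have := intervalIntegral.integral_eq_sub_of_hasDerivAt
      (fun t _ => hderiv t) (hcont.intervalIntegrable 0 1)
    rw [this]
    simp [hv]
  have hbound : (∫ t in (0:ℝ)..1, ⟪gradient ψ (x + t • v), v⟫)
      ≤ ∫ t in (0:ℝ)..1, (⟪gradient ψ x, v⟫ + L * ‖v‖ ^ 2 * t) := by
    apply intervalIntegral.integral_mono_on (by norm_num)
      (hcont.intervalIntegrable 0 1)
      ((continuous_const.add (continuous_const.mul continuous_id')).intervalIntegrable 0 1 :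
        IntervalIntegrable (fun t : ℝ => ⟪gradient ψ x, v⟫ + L * ‖v‖ ^ 2 * t) _ 0 1)
    intro t ht
    rw [Set.mem_Icc] at ht
    have h1 : ⟪gradient ψ (x + t • v), v⟫ - ⟪gradient ψ x, v⟫
        = ⟪gradient ψ (x + t • v) - gradient ψ x, v⟫ := by
      rw [inner_sub_left]
    have h2 : ⟪gradient ψ (x + t • v) - gradient ψ x, v⟫
        ≤ ‖gradient ψ (x + t • v) - gradient ψ x‖ * ‖v‖ := real_inner_le_norm _ _
    have h3 : ‖gradient ψ (x + t • v) - gradient ψ x‖ ≤ L * (t * ‖v‖) := by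
      have := hLip (x + t • v) x
      simpa [norm_smul, abs_of_nonneg ht.1, mul_assoc] using this
    have h4 : ‖gradient ψ (x + t • v) - gradient ψ x‖ * ‖v‖ ≤ L * (t * ‖v‖) * ‖v‖ := by
      gcongr
    show ⟪gradient ψ (x + t • v), v⟫ ≤ ⟪gradient ψ x, v⟫ + L * ‖v‖ ^ 2 * t
    nlinarith [norm_nonneg v]
  have hcalc : (∫ t in (0:ℝ)..1, (⟪gradient ψ x, v⟫ + L * ‖v‖ ^ 2 * t))
      = ⟪gradient ψ x, v⟫ + L / 2 * ‖v‖ ^ 2 := by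
    rw [intervalIntegral.integral_add (f := fun _ => ⟪gradient ψ x, v⟫) (g := fun t : ℝ => L * ‖v‖ ^ 2 * t) (intervalIntegrable_const)
      ((continuous_const.mul continuous_id').intervalIntegrable 0 1 :
        IntervalIntegrable (fun t : ℝ => L * ‖v‖ ^ 2 * t) _ 0 1)]
    rw [intervalIntegral.integral_const_mul, integral_id, intervalIntegral.integral_const]
    norm_num
    ring
  have := key ▸ (le_trans hbound (le_of_eq hcalc))
  linarith [this]

/-- one-step descent along a biased gradient direction.
For `ψ` with `L`-Lipschitz gradient, a step `x' = x - (1/a) d` with bias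
`‖d - ∇ψ(x)‖² ≤ εhat` satisfies
`ψ(x') ≤ ψ(x) - (1/(2a))‖∇ψ(x)‖² - (1/(2a))(1 - L/a)‖d‖² + εhat/(2a)`,
and if moreover `a ≥ 2L`, then
`ψ(x') ≤ ψ(x) - (1/(2a))‖∇ψ(x)‖² - (1/(4a))‖d‖² + εhat/(2a)`. -/
theorem biased_descent_step
    {n : ℕ} (ψ : EuclideanSpace ℝ (Fin n) → ℝ) (hdiff : Differentiable ℝ ψ)
    (L : ℝ) (hLip : ∀ u v, ‖gradient ψ u - gradient ψ v‖ ≤ L * ‖u - v‖)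
    (x dvec : EuclideanSpace ℝ (Fin n)) (εhat : ℝ) (hε : 0 ≤ εhat)
    (hbias : ‖dvec - gradient ψ x‖ ^ 2 ≤ εhat) (a : ℝ) (ha : 0 < a) :
    ψ (x - (1 / a) • dvec) ≤ ψ x - 1 / (2 * a) * ‖gradient ψ x‖ ^ 2
        - 1 / (2 * a) * (1 - L / a) * ‖dvec‖ ^ 2 + εhat / (2 * a) ∧
      (2 * L ≤ a →
        ψ (x - (1 / a) • dvec) ≤ ψ x - 1 / (2 * a) * ‖gradient ψ x‖ ^ 2
          - 1 / (4 * a) * ‖dvec‖ ^ 2 + εhat / (2 * a)) := by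
  set g := gradient ψ x with hgdef
  have hdesc := descent_lemma ψ hdiff L hLip x (x - (1 / a) • dvec)
  have hyx : x - (1 / a) • dvec - x = -((1 / a) • dvec) := by abel
  rw [hyx] at hdesc
  have hinner : ⟪g, -((1 / a) • dvec)⟫ = -(1 / a) * ⟪g, dvec⟫ := by
    rw [inner_neg_right, real_inner_smul_right]; ring
  have hnorm : ‖-((1 / a) • dvec)‖ ^ 2 = (1 / a) ^ 2 * ‖dvec‖ ^ 2 := by
    rw [norm_neg, norm_smul]
    simp [abs_of_pos (by positivity : (0:ℝ) < 1 / a), mul_pow]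
  rw [hinner, hnorm] at hdesc
  -- polarization: 2⟪g, d⟫ = ‖g‖² + ‖d‖² - ‖d - g‖²
  have hpolar : 2 * ⟪g, dvec⟫ = ‖g‖ ^ 2 + ‖dvec‖ ^ 2 - ‖dvec - g‖ ^ 2 := by
    have h := norm_sub_sq_real dvec g
    have hsymm : ⟪dvec, g⟫ = ⟪g, dvec⟫ := real_inner_comm _ _
    rw [hsymm] at h
    linarith
  have ha' : (0:ℝ) < 2 * a := by linarith
  have first : ψ (x - (1 / a) • dvec) ≤ ψ x - 1 / (2 * a) * ‖g‖ ^ 2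
      - 1 / (2 * a) * (1 - L / a) * ‖dvec‖ ^ 2 + εhat / (2 * a) := by
    have hb : ‖dvec - g‖ ^ 2 ≤ εhat := hbias
    have ha2 : (0:ℝ) < a ^ 2 := by positivity
    have e1 : -(1 / a) * ⟪g, dvec⟫ = -(1 / (2 * a)) * (‖g‖ ^ 2 + ‖dvec‖ ^ 2 - ‖dvec - g‖ ^ 2) := by
      have hIv : ⟪g, dvec⟫ = (‖g‖ ^ 2 + ‖dvec‖ ^ 2 - ‖dvec - g‖ ^ 2) / 2 := by linarith
      rw [hIv]
      field_simp
    rw [e1] at hdesc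
    have h2 : -(1 / (2 * a)) * (‖g‖ ^ 2 + ‖dvec‖ ^ 2 - ‖dvec - g‖ ^ 2)
        + L / 2 * ((1 / a) ^ 2 * ‖dvec‖ ^ 2)
        ≤ - (1 / (2 * a)) * ‖g‖ ^ 2 - 1 / (2 * a) * (1 - L / a) * ‖dvec‖ ^ 2
          + εhat / (2 * a) := by
      have e2 : -(1 / (2 * a)) * (‖g‖ ^ 2 + ‖dvec‖ ^ 2 - ‖dvec - g‖ ^ 2)
          + L / 2 * ((1 / a) ^ 2 * ‖dvec‖ ^ 2)
          = - (1 / (2 * a)) * ‖g‖ ^ 2 - 1 / (2 * a) * (1 - L / a) * ‖dvec‖ ^ 2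
            + ‖dvec - g‖ ^ 2 / (2 * a) := by
        field_simp
        ring
      rw [e2]
      gcongr
    linarith
  refine ⟨first, fun h2L => ?_⟩
  have hq : 1 / (4 * a) ≤ 1 / (2 * a) * (1 - L / a) := by
    have hkey : 1 / (2 * a) * (1 - L / a) - 1 / (4 * a) = (a - 2 * L) / (4 * a ^ 2) := by
      field_simp
      ring
    have hnum : (0:ℝ) ≤ (a - 2 * L) / (4 * a ^ 2) :=
      div_nonneg (by linarith) (by positivity)
    linarith
  have : 1 / (4 * a) * ‖dvec‖ ^ 2 ≤ 1 / (2 * a) * (1 - L / a) * ‖dvec‖ ^ 2 := by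
    gcongr
  linarith
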